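/- Let G be a graph with chromatic index χ'(G) and let k ≥ χ'(G). Then G has a proper k-edge-coloring in which every color class has size ⌊|E(G)|/k⌋ or ⌈|E(G)|/k⌉. -/

import Mathlib

/-- A proper edge-coloring of `G` with colors in `Fin m`, assigning a color to every
edge so that edges sharing a vertex receive distinct colors. -/
def IsProperEdgeColoring {V : Type*} (G : SimpleGraph V) {m : ℕ}
    (c : G.edgeSet → Fin m) : Prop :=
  ∀ e f : G.edgeSet, e ≠ f → (∃ v : V, v ∈ (e : Sym2 V) ∧ v ∈ (f : Sym2 V)) → c e ≠ c f

/-- The chromatic index of `G`. -/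
noncomputable def edgeChromaticNumber {V : Type*} (G : SimpleGraph V) : ℕ :=
  sInf {m | ∃ c : G.edgeSet → Fin m, IsProperEdgeColoring G c}

set_option linter.unusedSectionVars false

open Finset SimpleGraph

section Aux
variable {V : Type*} (G : SimpleGraph V)

/-- subgraph of edges colored i or j -/
def twoSub {k : ℕ} (c : G.edgeSet → Fin k) (i j : Fin k) : SimpleGraph V where
  Adj u v := ∃ h : G.Adj u v, c ⟨s(u,v), G.mem_edgeSet.mpr h⟩ = i ∨ c ⟨s(u,v), G.mem_edgeSet.mpr h⟩ = j
  symm := ⟨by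
    rintro u v ⟨h, hc⟩
    refine ⟨h.symm, ?_⟩
    have he : (⟨s(v,u), G.mem_edgeSet.mpr h.symm⟩ : G.edgeSet) = ⟨s(u,v), G.mem_edgeSet.mpr h⟩ :=
      Subtype.ext (Sym2.eq_swap)
    rw [he]; exact hc⟩
  loopless := ⟨fun v ⟨h, _⟩ => G.loopless.irrefl v h⟩

variable {G} {k : ℕ} {c : G.edgeSet → Fin k} {i j : Fin k}

lemma twoSub_adj_of_mem {e : G.edgeSet} (hc : c e = i ∨ c e = j) {u v : V}
    (hu : u ∈ (e : Sym2 V)) (hv : v ∈ (e : Sym2 V)) (huv : u ≠ v) :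
    (twoSub G c i j).Adj u v := by
  obtain ⟨e, he⟩ := e
  induction e using Sym2.ind with
  | _ a b =>
    have hadj : G.Adj a b := G.mem_edgeSet.mp he
    rw [Sym2.mem_iff] at hu hv
    have key : ∀ (hab : G.Adj u v), (twoSub G c i j).Adj u v := by
      intro hab
      refine ⟨hab, ?_⟩
      have : (⟨s(u,v), G.mem_edgeSet.mpr hab⟩ : G.edgeSet) = ⟨s(a,b), he⟩ := by
        apply Subtype.ext
        simp only
        rcases hu with rfl | rfl <;> rcases hv with rfl | rfl
        · exact absurd rfl huv
        · rfl
        · exact Sym2.eq_swap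
        · exact absurd rfl huv
      rw [this]; exact hc
    rcases hu with rfl | rfl <;> rcases hv with rfl | rfl
    · exact absurd rfl huv
    · exact key hadj
    · exact key hadj.symm
    · exact absurd rfl huv

lemma twoSub_comp_eq {e : G.edgeSet} (hc : c e = i ∨ c e = j) {u v : V}
    (hu : u ∈ (e : Sym2 V)) (hv : v ∈ (e : Sym2 V)) :
    (twoSub G c i j).connectedComponentMk u = (twoSub G c i j).connectedComponentMk v := by
  by_cases huv : u = v
  · rw [huv]
  · exact ConnectedComponent.connectedComponentMk_eq_of_adj (twoSub_adj_of_mem hc hu hv huv)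

/-- the component of an edge -/
noncomputable def compOf (c : G.edgeSet → Fin k) (i j : Fin k) (e : G.edgeSet) :
    (twoSub G c i j).ConnectedComponent :=
  (twoSub G c i j).connectedComponentMk (e : Sym2 V).out.1

lemma compOf_eq {e : G.edgeSet} (hc : c e = i ∨ c e = j) {v : V} (hv : v ∈ (e : Sym2 V)) :
    compOf c i j e = (twoSub G c i j).connectedComponentMk v :=
  twoSub_comp_eq hc (Sym2.out_fst_mem _) hv

open Classical in
/-- swap colors i and j on component S -/
noncomputable def swapC (c : G.edgeSet → Fin k) (i j : Fin k)
    (S : (twoSub G c i j).ConnectedComponent) (e : G.edgeSet) : Fin k :=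
  if (c e = i ∨ c e = j) ∧ compOf c i j e = S then (if c e = i then j else i) else c e

end Aux

section Aux2
variable {V : Type*} {G : SimpleGraph V} {k : ℕ} {c : G.edgeSet → Fin k} {i j : Fin k}
  {S : (twoSub G c i j).ConnectedComponent}

lemma swapC_proper (hij : i ≠ j) (hc : IsProperEdgeColoring G c) :
    IsProperEdgeColoring G (swapC c i j S) := by
  intro e f hef hshare h
  obtain ⟨v, hve, hvf⟩ := hshare
  have hc' := hc e f hef ⟨v, hve, hvf⟩
  have hcomp : (c e = i ∨ c e = j) → (c f = i ∨ c f = j) → compOf c i j e = compOf c i j f := by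
    intro h1 h2
    rw [compOf_eq h1 hve, compOf_eq h2 hvf]
  by_cases h1 : (c e = i ∨ c e = j) ∧ compOf c i j e = S <;>
    by_cases h2 : (c f = i ∨ c f = j) ∧ compOf c i j f = S
  · simp only [swapC, if_pos h1, if_pos h2] at h
    split_ifs at h with he hf hf
    · exact hc' (he.trans hf.symm)
    · exact hij h.symm
    · exact hij h
    · rcases h1.1 with h' | h'
      · exact he h'
      rcases h2.1 with h'' | h''
      · exact hf h''
      exact hc' (h'.trans h''.symm)
  · simp only [swapC, if_pos h1, if_neg h2] at h
    have hf2 : ¬ (c f = i ∨ c f = j) := fun hf => h2 ⟨hf, (hcomp h1.1 hf).symm.trans h1.2⟩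
    split_ifs at h with he
    · exact hf2 (Or.inr h.symm)
    · exact hf2 (Or.inl h.symm)
  · simp only [swapC, if_neg h1, if_pos h2] at h
    have he2 : ¬ (c e = i ∨ c e = j) := fun he => h1 ⟨he, (hcomp he h2.1).trans h2.2⟩
    split_ifs at h with hf
    · exact he2 (Or.inr h)
    · exact he2 (Or.inl h)
  · simp only [swapC, if_neg h1, if_neg h2] at h
    exact hc' h

end Aux2


lemma card_filter_eq_natCard {α : Type*} [Fintype α] {p : α → Prop} [h : DecidablePred p] :
    (univ.filter p).card = Nat.card {a // p a} := by
  rw [Nat.card_eq_fintype_card, Fintype.card_subtype]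

section Count
variable {V : Type*} [Fintype V] [DecidableEq V] {G : SimpleGraph V} [DecidableRel G.Adj]
  {k : ℕ} {c : G.edgeSet → Fin k} {i j : Fin k}

/-- endpoints of an edge as a finset -/
def endpts (e : G.edgeSet) : Finset V := univ.filter (· ∈ (e : Sym2 V))

lemma card_endpts (e : G.edgeSet) : (endpts e).card = 2 := by
  obtain ⟨e, he⟩ := e
  have hd := G.not_isDiag_of_mem_edgeSet he
  induction e using Sym2.ind with
  | _ a b =>
    have hab : a ≠ b := by simpa using hd
    have : endpts (⟨s(a,b), he⟩ : G.edgeSet) = {a, b} := by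
      ext w; simp [endpts, Sym2.mem_iff]
    rw [this, Finset.card_insert_of_notMem (by simpa using hab), Finset.card_singleton]

lemma mem_endpts {e : G.edgeSet} {v : V} : v ∈ endpts e ↔ v ∈ (e : Sym2 V) := by
  simp [endpts]

section WithS
variable [DecidableEq ((twoSub G c i j).ConnectedComponent)]
  {S : (twoSub G c i j).ConnectedComponent}

/-- L1: twice the number of i-edges in component S is at most the number of vertices of S. -/
lemma twice_card_le (hc : IsProperEdgeColoring G c)
    (hij : i ≠ j) :
    2 * (univ.filter fun e : G.edgeSet => c e = i ∧ compOf c i j e = S).card ≤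
      (univ.filter fun v : V => (twoSub G c i j).connectedComponentMk v = S).card := by
  classical
  set A1 := univ.filter fun e : G.edgeSet => c e = i ∧ compOf c i j e = S with hA1
  set W := univ.filter fun v : V => (twoSub G c i j).connectedComponentMk v = S with hW
  have hdisj : ∀ e ∈ A1, ∀ f ∈ A1, e ≠ f → Disjoint (endpts e) (endpts f) := by
    intro e he f hf hef
    rw [Finset.disjoint_left]
    intro v hve hvf
    exact hc e f hef ⟨v, mem_endpts.mp hve, mem_endpts.mp hvf⟩
      (by rw [(Finset.mem_filter.mp he).2.1, (Finset.mem_filter.mp hf).2.1])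
  have hsub : A1.biUnion endpts ⊆ W := by
    intro v hv
    obtain ⟨e, he, hve⟩ := Finset.mem_biUnion.mp hv
    obtain ⟨-, hei, heS⟩ := Finset.mem_filter.mp he
    rw [hW, Finset.mem_filter]
    refine ⟨Finset.mem_univ _, ?_⟩
    rw [← compOf_eq (Or.inl hei) (mem_endpts.mp hve)]
    exact heS
  calc 2 * A1.card = ∑ e ∈ A1, (endpts e).card := by
        rw [Finset.sum_congr rfl fun e _ => card_endpts e, Finset.sum_const, smul_eq_mul,
          Nat.mul_comm]
    _ = (A1.biUnion endpts).card := (Finset.card_biUnion hdisj).symm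
    _ ≤ W.card := Finset.card_le_card hsub


/-- step lemma: a non-root vertex of a component has a neighbor closer to the root. -/
lemma exists_closer {H : SimpleGraph V} {v r : V} (hreach : H.Reachable v r) (hvr : v ≠ r) :
    ∃ u, H.Adj v u ∧ H.dist u r < H.dist v r := by
  obtain ⟨p, hp⟩ := hreach.exists_walk_length_eq_dist
  have hpos : 0 < H.dist v r := hreach.pos_dist_of_ne hvr
  have hnil : ¬ p.Nil := by
    rw [SimpleGraph.Walk.nil_iff_length_eq]
    omega
  obtain ⟨u, h, q, rfl⟩ := SimpleGraph.Walk.not_nil_iff.mp hnil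
  refine ⟨u, h, ?_⟩
  have : H.dist u r ≤ q.length := H.dist_le q
  have hlen : q.length + 1 = H.dist v r := by simpa using hp
  omega

/-- L2: the number of vertices of component S is at most #edges+1. -/
lemma card_vert_le (hij : i ≠ j) {S : (twoSub G c i j).ConnectedComponent} :
    (univ.filter fun v : V => (twoSub G c i j).connectedComponentMk v = S).card ≤
      (univ.filter fun e : G.edgeSet => (c e = i ∨ c e = j) ∧ compOf c i j e = S).card + 1 := by
  classical
  set W := univ.filter fun v : V => (twoSub G c i j).connectedComponentMk v = S with hW
  set ES := univ.filter fun e : G.edgeSet => (c e = i ∨ c e = j) ∧ compOf c i j e = S with hES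
  obtain ⟨r, hr⟩ := S.exists_rep
  have hr' : (twoSub G c i j).connectedComponentMk r = S := hr
  by_cases hne : (W.erase r).Nonempty
  swap
  · have : W ⊆ {r} := by
      intro v hv
      rw [Finset.mem_singleton]
      by_contra hvr
      exact hne ⟨v, Finset.mem_erase.mpr ⟨hvr, hv⟩⟩
    calc W.card ≤ 1 := by simpa using Finset.card_le_card this
      _ ≤ ES.card + 1 := by omega
  have key : ∀ v ∈ W.erase r, ∃ e : G.edgeSet, e ∈ ES ∧ v ∈ (e : Sym2 V) ∧
      ∃ u, u ∈ (e : Sym2 V) ∧ (twoSub G c i j).dist u r < (twoSub G c i j).dist v r ∧ u ≠ v := by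
    intro v hv
    have hvr : v ≠ r := (Finset.mem_erase.mp hv).1
    have hvS : (twoSub G c i j).connectedComponentMk v = S :=
      (Finset.mem_filter.mp (Finset.mem_erase.mp hv).2).2
    have hreach : (twoSub G c i j).Reachable v r :=
      ConnectedComponent.exact (hvS.trans hr'.symm)
    obtain ⟨u, hadj, hdist⟩ := exists_closer hreach hvr
    obtain ⟨hGadj, hcol⟩ := hadj
    refine ⟨⟨s(v,u), G.mem_edgeSet.mpr hGadj⟩, ?_, ?_, u, ?_, hdist, hGadj.ne'⟩
    · rw [hES, Finset.mem_filter]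
      exact ⟨Finset.mem_univ _, hcol, by
        rw [compOf_eq hcol (Sym2.mem_mk_left v u)]; exact hvS⟩
    · exact Sym2.mem_mk_left v u
    · exact Sym2.mem_mk_right v u
  choose f hf1 hf2 hf3 using key
  obtain ⟨v₀, hv₀⟩ := hne
  set F : V → G.edgeSet := fun v => if h : v ∈ W.erase r then f v h else f v₀ hv₀ with hF
  have hmaps : ∀ v ∈ W.erase r, F v ∈ ES := by
    intro v hv; rw [hF]; simp only [dif_pos hv]; exact hf1 v hv
  have hinj : Set.InjOn F (W.erase r) := by
    intro v hv v' hv' heq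
    simp only [Finset.coe_erase, Set.mem_diff, Finset.mem_coe] at hv hv'
    have hv : v ∈ W.erase r := by
      rcases hv with ⟨h1, h2⟩; exact Finset.mem_erase.mpr ⟨by simpa using h2, h1⟩
    have hv' : v' ∈ W.erase r := by
      rcases hv' with ⟨h1, h2⟩; exact Finset.mem_erase.mpr ⟨by simpa using h2, h1⟩
    rw [hF] at heq
    simp only [dif_pos hv, dif_pos hv'] at heq
    by_contra hne'
    obtain ⟨u, hu, hdu, hune⟩ := hf3 v hv
    obtain ⟨u', hu', hdu', hune'⟩ := hf3 v' hv'
    have hvmem := hf2 v hv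
    have hvmem' := hf2 v' hv'
    rw [heq] at hvmem hu
    generalize hgen : ((f v' hv' : G.edgeSet) : Sym2 V) = E at hvmem hvmem' hu hu'
    induction E using Sym2.ind with
    | _ a b =>
      simp only [Sym2.mem_iff] at hvmem hvmem' hu hu'
      have huv' : u = v' := by
        rcases hvmem with rfl | rfl <;> rcases hvmem' with rfl | rfl <;>
          rcases hu with rfl | rfl <;> first | rfl | omega | (exact absurd rfl hne') |
            (exact absurd rfl hune)
      rw [huv'] at hdu
      have huv : u' = v := by
        rcases hvmem with rfl | rfl <;> rcases hvmem' with rfl | rfl <;>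
          rcases hu' with rfl | rfl <;> first | rfl | omega | (exact absurd rfl hne') |
            (exact absurd rfl (Ne.symm hne')) | (exact absurd rfl hune')
      rw [huv] at hdu'
      omega
  have h1 : (W.erase r).card ≤ ES.card := Finset.card_le_card_of_injOn F hmaps hinj
  have h2 : W.card ≤ (W.erase r).card + 1 := by
    by_cases hrW : r ∈ W
    · rw [Finset.card_erase_of_mem hrW]
      omega
    · rw [Finset.erase_eq_of_notMem hrW]
      omega
  omega


variable {S : (twoSub G c i j).ConnectedComponent}

lemma swap_filter_ne {l : Fin k} (hl : l ≠ i) (hl' : l ≠ j) :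
    (univ.filter fun e : G.edgeSet => swapC c i j S e = l) =
      univ.filter fun e : G.edgeSet => c e = l := by
  ext e
  simp only [Finset.mem_filter, Finset.mem_univ, true_and]
  unfold swapC
  split_ifs with h1 h2
  · constructor
    · intro h; exact absurd h.symm hl'
    · intro h; exact absurd (h2.symm.trans h) (Ne.symm hl)
  · constructor
    · intro h; exact absurd h.symm hl
    · intro h; rcases h1.1 with h' | h'
      · exact absurd h' h2
      · exact absurd (h'.symm.trans h) (Ne.symm hl')
  · exact Iff.rfl

lemma swap_filter_i (hij : i ≠ j) :
    (univ.filter fun e : G.edgeSet => swapC c i j S e = i) =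
      ((univ.filter fun e : G.edgeSet => c e = i) \
        (univ.filter fun e : G.edgeSet => c e = i ∧ compOf c i j e = S)) ∪
        (univ.filter fun e : G.edgeSet => c e = j ∧ compOf c i j e = S) := by
  ext e
  simp only [Finset.mem_union, Finset.mem_sdiff, Finset.mem_filter, Finset.mem_univ, true_and]
  unfold swapC
  by_cases hS : compOf c i j e = S <;> by_cases hci : c e = i <;> by_cases hcj : c e = j
  · exact absurd (hci.symm.trans hcj) hij
  · rw [if_pos ⟨Or.inl hci, hS⟩, if_pos hci]
    constructor
    · intro h; exact absurd h.symm hij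
    · rintro (⟨-, h⟩ | ⟨h, -⟩)
      · exact absurd ⟨hci, hS⟩ h
      · exact absurd (hci.symm.trans h) hij
  · rw [if_pos ⟨Or.inr hcj, hS⟩, if_neg hci]
    simp [hci, hcj, hS]
  · rw [if_neg (by tauto)]
    simp [hci, hcj]
  · exact absurd (hci.symm.trans hcj) hij
  · rw [if_neg (by tauto)]
    simp [hci, hS]
  · rw [if_neg (by tauto)]
    simp [hci, hcj, hS]
  · rw [if_neg (by tauto)]
    simp [hci, hcj]

lemma swap_filter_j (hij : i ≠ j) :
    (univ.filter fun e : G.edgeSet => swapC c i j S e = j) =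
      ((univ.filter fun e : G.edgeSet => c e = j) \
        (univ.filter fun e : G.edgeSet => c e = j ∧ compOf c i j e = S)) ∪
        (univ.filter fun e : G.edgeSet => c e = i ∧ compOf c i j e = S) := by
  ext e
  simp only [Finset.mem_union, Finset.mem_sdiff, Finset.mem_filter, Finset.mem_univ, true_and]
  unfold swapC
  by_cases hS : compOf c i j e = S <;> by_cases hci : c e = i <;> by_cases hcj : c e = j
  · exact absurd (hci.symm.trans hcj) hij
  · rw [if_pos ⟨Or.inl hci, hS⟩, if_pos hci]
    simp [hci, hcj, hS]
  · rw [if_pos ⟨Or.inr hcj, hS⟩, if_neg hci]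
    constructor
    · intro h; exact absurd h hij
    · rintro (⟨-, h⟩ | ⟨h, -⟩)
      · exact absurd ⟨hcj, hS⟩ h
      · exact absurd (h.symm.trans hcj) hij
  · rw [if_neg (by tauto)]
    simp [hci, hcj]
  · exact absurd (hci.symm.trans hcj) hij
  · rw [if_neg (by tauto)]
    simp [hcj, hci, hS]
  · rw [if_neg (by tauto)]
    simp [hcj, hS]
  · rw [if_neg (by tauto)]
    simp [hci, hcj]

lemma swap_card_i (hij : i ≠ j) :
    (univ.filter fun e : G.edgeSet => swapC c i j S e = i).card +
      (univ.filter fun e : G.edgeSet => c e = i ∧ compOf c i j e = S).card =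
    (univ.filter fun e : G.edgeSet => c e = i).card +
      (univ.filter fun e : G.edgeSet => c e = j ∧ compOf c i j e = S).card := by
  rw [swap_filter_i hij]
  have hsub : (univ.filter fun e : G.edgeSet => c e = i ∧ compOf c i j e = S) ⊆
      univ.filter fun e : G.edgeSet => c e = i := by
    intro e he
    simp only [Finset.mem_filter] at he ⊢
    exact ⟨he.1, he.2.1⟩
  have hdisj : Disjoint
      ((univ.filter fun e : G.edgeSet => c e = i) \
        (univ.filter fun e : G.edgeSet => c e = i ∧ compOf c i j e = S))
      (univ.filter fun e : G.edgeSet => c e = j ∧ compOf c i j e = S) := by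
    rw [Finset.disjoint_left]
    intro e he hf
    simp only [Finset.mem_sdiff, Finset.mem_filter] at he hf
    exact hij (he.1.2.symm.trans hf.2.1)
  rw [Finset.card_union_of_disjoint hdisj, Finset.card_sdiff_of_subset hsub]
  have := Finset.card_le_card hsub
  omega

lemma swap_card_j (hij : i ≠ j) :
    (univ.filter fun e : G.edgeSet => swapC c i j S e = j).card +
      (univ.filter fun e : G.edgeSet => c e = j ∧ compOf c i j e = S).card =
    (univ.filter fun e : G.edgeSet => c e = j).card +
      (univ.filter fun e : G.edgeSet => c e = i ∧ compOf c i j e = S).card := by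
  rw [swap_filter_j hij]
  have hsub : (univ.filter fun e : G.edgeSet => c e = j ∧ compOf c i j e = S) ⊆
      univ.filter fun e : G.edgeSet => c e = j := by
    intro e he
    simp only [Finset.mem_filter] at he ⊢
    exact ⟨he.1, he.2.1⟩
  have hdisj : Disjoint
      ((univ.filter fun e : G.edgeSet => c e = j) \
        (univ.filter fun e : G.edgeSet => c e = j ∧ compOf c i j e = S))
      (univ.filter fun e : G.edgeSet => c e = i ∧ compOf c i j e = S) := by
    rw [Finset.disjoint_left]
    intro e he hf
    simp only [Finset.mem_sdiff, Finset.mem_filter] at he hf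
    exact hij (hf.2.1.symm.trans he.1.2)
  rw [Finset.card_union_of_disjoint hdisj, Finset.card_sdiff_of_subset hsub]
  have := Finset.card_le_card hsub
  omega



lemma ES_card {S : (twoSub G c i j).ConnectedComponent} (hij : i ≠ j) :
    (univ.filter fun e : G.edgeSet => (c e = i ∨ c e = j) ∧ compOf c i j e = S).card =
      (univ.filter fun e : G.edgeSet => c e = i ∧ compOf c i j e = S).card +
      (univ.filter fun e : G.edgeSet => c e = j ∧ compOf c i j e = S).card := by
  have hun : (univ.filter fun e : G.edgeSet => (c e = i ∨ c e = j) ∧ compOf c i j e = S) =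
      (univ.filter fun e : G.edgeSet => c e = i ∧ compOf c i j e = S) ∪
      (univ.filter fun e : G.edgeSet => c e = j ∧ compOf c i j e = S) := by
    ext e
    simp only [Finset.mem_union, Finset.mem_filter, Finset.mem_univ, true_and]
    tauto
  rw [hun, Finset.card_union_of_disjoint]
  rw [Finset.disjoint_left]
  intro e he hf
  simp only [Finset.mem_filter] at he hf
  exact hij (he.2.1.symm.trans hf.2.1)

end WithS

lemma exists_good_S (hc : IsProperEdgeColoring G c) (hij : i ≠ j)
    (hlt : (univ.filter fun e : G.edgeSet => c e = j).card <
      (univ.filter fun e : G.edgeSet => c e = i).card) :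
    ∃ S : (twoSub G c i j).ConnectedComponent,
      Nat.card {e : G.edgeSet // c e = i ∧ compOf c i j e = S} =
        Nat.card {e : G.edgeSet // c e = j ∧ compOf c i j e = S} + 1 := by
  classical
  haveI : Fintype ((twoSub G c i j).ConnectedComponent) := Fintype.ofFinite _
  have hfib : ∀ l : Fin k, (univ.filter fun e : G.edgeSet => c e = l).card =
      ∑ S : (twoSub G c i j).ConnectedComponent,
        (univ.filter fun e : G.edgeSet => c e = l ∧ compOf c i j e = S).card := by
    intro l
    rw [Finset.card_eq_sum_card_fiberwise
      (f := compOf c i j) (t := univ) (fun e _ => Finset.mem_univ _)]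
    refine Finset.sum_congr rfl fun S _ => ?_
    rw [Finset.filter_filter]
  rw [hfib i, hfib j] at hlt
  obtain ⟨S, -, hS⟩ := Finset.exists_lt_of_sum_lt hlt
  refine ⟨S, ?_⟩
  have h1 := twice_card_le (S := S) hc hij
  have h2 := card_vert_le (S := S) hij
  have h3 := ES_card (S := S) hij
  simp only [card_filter_eq_natCard] at h1 h2 h3 hS ⊢
  omega

lemma swap_decreases (hij : i ≠ j)
    [DecidableEq ((twoSub G c i j).ConnectedComponent)]
    {S : (twoSub G c i j).ConnectedComponent}
    (hS : Nat.card {e : G.edgeSet // c e = i ∧ compOf c i j e = S} =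
        Nat.card {e : G.edgeSet // c e = j ∧ compOf c i j e = S} + 1)
    (hlt : (univ.filter fun e : G.edgeSet => c e = j).card + 2 ≤
      (univ.filter fun e : G.edgeSet => c e = i).card) :
    ∑ l : Fin k, (univ.filter fun e : G.edgeSet => swapC c i j S e = l).card ^ 2 <
      ∑ l : Fin k, (univ.filter fun e : G.edgeSet => c e = l).card ^ 2 := by
  have hsplit : ∀ d : Fin k → ℕ, ∑ l, d l = d i + d j + ∑ l ∈ univ \ {i, j}, d l := by
    intro d
    rw [← Finset.sum_sdiff (Finset.subset_univ {i, j}), Finset.sum_pair hij]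
    ring
  rw [hsplit, hsplit]
  have hrest : ∑ l ∈ univ \ {i, j},
        (univ.filter fun e : G.edgeSet => swapC c i j S e = l).card ^ 2 =
      ∑ l ∈ univ \ {i, j}, (univ.filter fun e : G.edgeSet => c e = l).card ^ 2 := by
    refine Finset.sum_congr rfl fun l hl => ?_
    simp only [Finset.mem_sdiff, Finset.mem_insert, Finset.mem_singleton] at hl
    rw [swap_filter_ne (fun h => hl.2 (Or.inl h)) (fun h => hl.2 (Or.inr h))]
  rw [hrest]
  have hci := swap_card_i (S := S) hij
  have hcj := swap_card_j (S := S) hij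
  simp only [card_filter_eq_natCard] at hci hcj
  have hle : (univ.filter fun e : G.edgeSet => c e = i ∧ compOf c i j e = S).card ≤
      (univ.filter fun e : G.edgeSet => c e = i).card :=
    Finset.card_le_card (fun e he => by
      simp only [Finset.mem_filter] at he ⊢; exact ⟨he.1, he.2.1⟩)
  simp only [card_filter_eq_natCard] at hle hlt ⊢
  set ni := Nat.card {e : G.edgeSet // c e = i}
  set nj := Nat.card {e : G.edgeSet // c e = j}
  set ni' := Nat.card {e : G.edgeSet // swapC c i j S e = i}
  set nj' := Nat.card {e : G.edgeSet // swapC c i j S e = j}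
  have e1 : ni' + 1 = ni := by omega
  have e2 : nj' = nj + 1 := by omega
  have : ni' ^ 2 + nj' ^ 2 < ni ^ 2 + nj ^ 2 := by nlinarith
  omega

lemma balance_aux :
    ∀ N : ℕ, ∀ c : G.edgeSet → Fin k, IsProperEdgeColoring G c →
    (∑ l : Fin k, (univ.filter fun e : G.edgeSet => c e = l).card ^ 2) ≤ N →
    ∃ c' : G.edgeSet → Fin k, IsProperEdgeColoring G c' ∧
      ∀ i j : Fin k, (univ.filter fun e : G.edgeSet => c' e = i).card ≤
        (univ.filter fun e : G.edgeSet => c' e = j).card + 1 := by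
  intro N
  induction N with
  | zero =>
    intro c hc hPhi
    refine ⟨c, hc, fun i j => ?_⟩
    have hi : (univ.filter fun e : G.edgeSet => c e = i).card ^ 2 = 0 :=
      Nat.eq_zero_of_le_zero (le_trans (Finset.single_le_sum
        (f := fun l => (univ.filter fun e : G.edgeSet => c e = l).card ^ 2)
        (fun _ _ => Nat.zero_le _) (Finset.mem_univ i)) hPhi)
    have := pow_eq_zero_iff (n := 2) (by norm_num) |>.mp hi
    omega
  | succ N ih =>
    intro c hc hPhi
    by_cases hbal : ∀ i j : Fin k, (univ.filter fun e : G.edgeSet => c e = i).card ≤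
        (univ.filter fun e : G.edgeSet => c e = j).card + 1
    · exact ⟨c, hc, hbal⟩
    push_neg at hbal
    obtain ⟨i, j, hij2⟩ := hbal
    have hij : i ≠ j := by rintro rfl; omega
    obtain ⟨S, hS⟩ := exists_good_S hc hij (by omega)
    haveI : DecidableEq ((twoSub G c i j).ConnectedComponent) := Classical.decEq _
    have hdec := swap_decreases hij (S := S) hS (by omega)
    exact ih (swapC c i j S) (swapC_proper hij hc) (by omega)

lemma sum_card_classes {k : ℕ} (c : G.edgeSet → Fin k) :
    ∑ l : Fin k, (univ.filter fun e : G.edgeSet => c e = l).card = Fintype.card G.edgeSet := by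
  rw [← Finset.card_univ]
  exact (Finset.card_eq_sum_card_fiberwise fun e _ => Finset.mem_univ (c e)).symm

end Count

lemma nat_lemma {k : ℕ} (hk : 0 < k) (n : Fin k → ℕ)
    (hbal : ∀ i j : Fin k, n i ≤ n j + 1) (m : ℕ) (hm : ∑ l, n l = m) :
    ∀ i, n i = m / k ∨ n i = (m + k - 1) / k := by
  intro i
  obtain ⟨k', rfl⟩ : ∃ k', k = k' + 1 := ⟨k - 1, by omega⟩
  have hsplit : n i + ∑ l ∈ Finset.univ.erase i, n l = m := by
    rw [Finset.add_sum_erase _ n (Finset.mem_univ i)]; exact hm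
  have hcard : (Finset.univ.erase i).card = k' := by
    rw [Finset.card_erase_of_mem (Finset.mem_univ i), Finset.card_univ, Fintype.card_fin]
    omega
  have hup : ∑ l ∈ Finset.univ.erase i, n l ≤ k' * (n i + 1) := by
    calc ∑ l ∈ Finset.univ.erase i, n l ≤ ∑ _l ∈ Finset.univ.erase i, (n i + 1) :=
          Finset.sum_le_sum fun l _ => hbal l i
      _ = k' * (n i + 1) := by rw [Finset.sum_const, hcard, smul_eq_mul]
  have hlow : k' * (n i - 1) ≤ ∑ l ∈ Finset.univ.erase i, n l := by
    calc k' * (n i - 1) = ∑ _l ∈ Finset.univ.erase i, (n i - 1) := by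
          rw [Finset.sum_const, hcard, smul_eq_mul]
      _ ≤ ∑ l ∈ Finset.univ.erase i, n l :=
          Finset.sum_le_sum fun l _ => by have := hbal i l; omega
  set t := n i with ht
  have hfloor : m / (k' + 1) ≤ t := by
    have hexp2 : (t + 1) * (k' + 1) = k' * (t + 1) + t + 1 := by ring
    have hlt : m < (t + 1) * (k' + 1) := by omega
    have := (Nat.div_lt_iff_lt_mul (by omega : 0 < k' + 1)).mpr hlt
    omega
  have hceil : t ≤ (m + (k' + 1) - 1) / (k' + 1) := by
    rw [Nat.le_div_iff_mul_le (by omega : 0 < k' + 1)]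
    rcases Nat.eq_zero_or_pos t with h0 | htpos
    · rw [h0]; simp
    obtain ⟨s, hs⟩ : ∃ s, t = s + 1 := ⟨t - 1, by omega⟩
    rw [hs] at hlow hsplit ⊢
    have h1 : k' * s ≤ ∑ l ∈ Finset.univ.erase i, n l := by
      calc k' * s = k' * ((s + 1) - 1) := by norm_num
        _ ≤ _ := hlow
    have hexp : (s + 1) * (k' + 1) = k' * s + k' + s + 1 := by ring
    omega
  have hcc : (m + (k' + 1) - 1) / (k' + 1) ≤ m / (k' + 1) + 1 := by
    have h1 : m + (k' + 1) - 1 ≤ m + (k' + 1) := by omega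
    have h2 : (m + (k' + 1)) / (k' + 1) = m / (k' + 1) + 1 := Nat.add_div_right m (by omega)
    calc (m + (k' + 1) - 1) / (k' + 1) ≤ (m + (k' + 1)) / (k' + 1) := Nat.div_le_div_right h1
      _ = m / (k' + 1) + 1 := h2
  omega


/-- McDiarmid's equitable edge-coloring theorem: for every `k ≥ χ'(G)`, the graph `G`
has a proper `k`-edge-coloring in which every color class has size
`⌊|E(G)|/k⌋` or `⌈|E(G)|/k⌉`. -/
theorem equitable_edge_coloring {V : Type*} [Fintype V] [DecidableEq V]
    (G : SimpleGraph V) [DecidableRel G.Adj] (k : ℕ) (hk : edgeChromaticNumber G ≤ k) :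
    ∃ c : G.edgeSet → Fin k, IsProperEdgeColoring G c ∧
      ∀ i : Fin k,
        (Finset.univ.filter fun e : G.edgeSet => c e = i).card = G.edgeFinset.card / k ∨
        (Finset.univ.filter fun e : G.edgeSet => c e = i).card = (G.edgeFinset.card + k - 1) / k := by
  have hne : {m | ∃ c : G.edgeSet → Fin m, IsProperEdgeColoring G c}.Nonempty := by
    refine ⟨Fintype.card G.edgeSet, Fintype.equivFin G.edgeSet, ?_⟩
    intro e f hef _ h
    exact hef ((Fintype.equivFin G.edgeSet).injective h)
  obtain ⟨c0, hc0⟩ := Nat.sInf_mem hne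
  set c1 : G.edgeSet → Fin k := fun e => Fin.castLE hk (c0 e) with hc1def
  have hc1 : IsProperEdgeColoring G c1 := by
    intro e f hef hsh h
    exact hc0 e f hef hsh (Fin.castLE_injective hk h)
  obtain ⟨c', hc', hbal⟩ := balance_aux
    (∑ l : Fin k, (Finset.univ.filter fun e : G.edgeSet => c1 e = l).card ^ 2) c1 hc1 le_rfl
  refine ⟨c', hc', ?_⟩
  rcases Nat.eq_zero_or_pos k with rfl | hkpos
  · intro i; exact i.elim0
  have hsum : ∑ l : Fin k, (Finset.univ.filter fun e : G.edgeSet => c' e = l).card =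
      G.edgeFinset.card := by
    rw [sum_card_classes c', SimpleGraph.edgeFinset_card]
  exact nat_lemma hkpos (fun l => (Finset.univ.filter fun e : G.edgeSet => c' e = l).card)
    hbal _ hsum
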